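/- For every integer n ≥ 1, the sum over all partitions λ of n of 1/z_λ(t) equals 1 - t, where z_λ(t) = ∏_{i≥1} i^{m_i(λ)} m_i(λ)! / ∏_j (1 - t^{λ_j}). -/

import Mathlib

open Finset

/-- `z_λ` (the classical value, without `t`): `∏ i^{m_i(λ)} m_i(λ)!`. -/
def zNat (s : Multiset ℕ) : ℕ :=
  s.prod * ∏ i ∈ s.toFinset, (s.count i).factorial

namespace ZlamAux

instance : CharZero (RatFunc ℚ) where
  cast_injective a b h := by
    have h2 : algebraMap (Polynomial ℚ) (RatFunc ℚ) (a : Polynomial ℚ) = algebraMap (Polynomial ℚ) (RatFunc ℚ) (b : Polynomial ℚ) := by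
      rw [map_natCast, map_natCast]; exact_mod_cast h
    exact_mod_cast RatFunc.algebraMap_injective ℚ h2

noncomputable def w (j : ℕ) : RatFunc ℚ := 1 - RatFunc.X ^ j

noncomputable def F (s : Multiset ℕ) : RatFunc ℚ :=
  (s.map w).prod / (zNat s : RatFunc ℚ)

noncomputable def A (n : ℕ) : RatFunc ℚ := ∑ lam : n.Partition, F lam.parts

lemma zNat_pos (s : Multiset ℕ) (h : ∀ x ∈ s, 0 < x) : 0 < zNat s := by
  unfold zNat
  exact Nat.mul_pos (Multiset.prod_pos h)
    (Finset.prod_pos fun i _ => Nat.factorial_pos _)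

lemma zNat_erase (s : Multiset ℕ) (k : ℕ) (hk : k ∈ s) :
    zNat s = (k * s.count k) * zNat (s.erase k) := by
  have h1 : s.prod = k * (s.erase k).prod := (Multiset.prod_erase hk).symm
  have hsub : (s.erase k).toFinset ⊆ s.toFinset :=
    Multiset.toFinset_subset.mpr (Multiset.subset_of_le (Multiset.erase_le k s))
  have h2 : ∏ i ∈ (s.erase k).toFinset, ((s.erase k).count i).factorial
      = ∏ i ∈ s.toFinset, ((s.erase k).count i).factorial := by
    refine Finset.prod_subset hsub fun i hi hni => ?_
    have : (s.erase k).count i = 0 := by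
      simpa [Multiset.count_eq_zero] using fun h => hni (Multiset.mem_toFinset.mpr h)
    simp [this]
  have hkt : k ∈ s.toFinset := Multiset.mem_toFinset.mpr hk
  have h3 : ∏ i ∈ s.toFinset, (s.count i).factorial
      = (s.count k).factorial * ∏ i ∈ s.toFinset.erase k, (s.count i).factorial :=
    (Finset.mul_prod_erase _ _ hkt).symm
  have h4 : ∏ i ∈ s.toFinset, ((s.erase k).count i).factorial
      = (s.count k - 1).factorial * ∏ i ∈ s.toFinset.erase k, (s.count i).factorial := by
    rw [← Finset.mul_prod_erase _ _ hkt, Multiset.count_erase_self]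
    congr 1
    refine Finset.prod_congr rfl fun i hi => ?_
    rw [Multiset.count_erase_of_ne (Finset.ne_of_mem_erase hi)]
  have hc : 1 ≤ s.count k := Multiset.count_pos.mpr hk
  have h5 : (s.count k).factorial = s.count k * (s.count k - 1).factorial := by
    obtain ⟨m, hm⟩ := Nat.exists_eq_succ_of_ne_zero (by omega : s.count k ≠ 0)
    rw [hm]; simp [Nat.factorial_succ]
  unfold zNat
  rw [h1, h3, h2, h4, h5]
  ring

lemma F_erase (s : Multiset ℕ) (k : ℕ) (hk : k ∈ s) (hpos : ∀ x ∈ s, 0 < x) :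
    ((k * s.count k : ℕ) : RatFunc ℚ) * F s = w k * F (s.erase k) := by
  have hz : zNat s = (k * s.count k) * zNat (s.erase k) := zNat_erase s k hk
  have hze : 0 < zNat (s.erase k) :=
    zNat_pos _ fun x hx => hpos x (Multiset.mem_of_mem_erase hx)
  have hkc : 0 < k * s.count k :=
    Nat.mul_pos (hpos k hk) (Multiset.count_pos.mpr hk)
  have hze' : ((zNat (s.erase k) : ℕ) : RatFunc ℚ) ≠ 0 := Nat.cast_ne_zero.mpr hze.ne'
  have hkc' : ((k * s.count k : ℕ) : RatFunc ℚ) ≠ 0 := Nat.cast_ne_zero.mpr hkc.ne'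
  have hmap : (s.map w).prod = w k * ((s.erase k).map w).prod :=
    (Multiset.prod_map_erase hk).symm
  have hk0 : ((k : ℕ) : RatFunc ℚ) ≠ 0 := Nat.cast_ne_zero.mpr (hpos k hk).ne'
  have hc0 : ((s.count k : ℕ) : RatFunc ℚ) ≠ 0 :=
    Nat.cast_ne_zero.mpr (Multiset.count_pos.mpr hk).ne'
  unfold F
  rw [hz, hmap]
  push_cast
  field_simp

/-- removing a part `k` is a bijection from partitions of `n` containing `k`
to partitions of `n - k`. -/
def eraseEquiv (n k : ℕ) (hk : 1 ≤ k) (hkn : k ≤ n) :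
    {lam : n.Partition // k ∈ lam.parts} ≃ (n - k).Partition where
  toFun x := ⟨x.1.parts.erase k,
    fun hi => x.1.parts_pos (Multiset.mem_of_mem_erase hi), by
      have h : k + (x.1.parts.erase k).sum = n := by
        rw [← Multiset.sum_cons, Multiset.cons_erase x.2, x.1.parts_sum]
      omega⟩
  invFun mu := ⟨⟨k ::ₘ mu.parts,
      by intro i hi
         rcases Multiset.mem_cons.mp hi with h | h
         · omega
         · exact mu.parts_pos h, by
      simp [mu.parts_sum]; omega⟩, Multiset.mem_cons_self _ _⟩
  left_inv x := Subtype.ext (Nat.Partition.ext (Multiset.cons_erase x.2))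
  right_inv mu := by
    ext1
    simp

lemma sum_filter_eq (n k : ℕ) (hk : 1 ≤ k) (hkn : k ≤ n) :
    ∑ lam ∈ Finset.univ.filter (fun lam : n.Partition => k ∈ lam.parts),
      F (lam.parts.erase k) = A (n - k) := by
  rw [Finset.sum_subtype (p := fun lam : n.Partition => k ∈ lam.parts)
    (Finset.univ.filter (fun lam : n.Partition => k ∈ lam.parts))
    (fun lam => by simp) (fun lam => F (lam.parts.erase k))]
  exact Fintype.sum_equiv (eraseEquiv n k hk hkn) _ _ (fun x => rfl)

lemma toFinset_filter (n : ℕ) (lam : n.Partition) :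
    Finset.filter (fun k => k ∈ lam.parts) (Finset.Icc 1 n) = lam.parts.toFinset := by
  ext k
  simp only [Finset.mem_filter, Finset.mem_Icc, Multiset.mem_toFinset]
  constructor
  · rintro ⟨_, h⟩; exact h
  · intro h
    refine ⟨⟨lam.parts_pos h, ?_⟩, h⟩
    rw [← lam.parts_sum]
    exact Multiset.le_sum_of_mem h

lemma key (n : ℕ) (lam : n.Partition) :
    (n : RatFunc ℚ) * F lam.parts
      = ∑ k ∈ lam.parts.toFinset, w k * F (lam.parts.erase k) := by
  have hsum : (∑ k ∈ lam.parts.toFinset, lam.parts.count k • k) = n := by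
    rw [← Finset.sum_multiset_map_count, Multiset.map_id', lam.parts_sum]
  have hc : ((n : ℕ) : RatFunc ℚ)
      = ∑ k ∈ lam.parts.toFinset, ((k * lam.parts.count k : ℕ) : RatFunc ℚ) := by
    rw [← Nat.cast_sum]
    congr 1
    exact hsum.symm.trans (Finset.sum_congr rfl fun k _ => by simp [smul_eq_mul, mul_comm])
  rw [hc, Finset.sum_mul]
  exact Finset.sum_congr rfl fun k hkk =>
    F_erase _ k (Multiset.mem_toFinset.mp hkk) (fun x hx => lam.parts_pos hx)

lemma recurrence (n : ℕ) :
    (n : RatFunc ℚ) * A n = ∑ k ∈ Finset.Icc 1 n, w k * A (n - k) := by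
  unfold A
  rw [Finset.mul_sum]
  calc ∑ lam : n.Partition, (n : RatFunc ℚ) * F lam.parts
      = ∑ lam : n.Partition, ∑ k ∈ Finset.Icc 1 n,
          (if k ∈ lam.parts then w k * F (lam.parts.erase k) else 0) := by
        refine Finset.sum_congr rfl fun lam _ => ?_
        rw [key n lam, ← toFinset_filter n lam, Finset.sum_filter]
    _ = ∑ k ∈ Finset.Icc 1 n, ∑ lam : n.Partition,
          (if k ∈ lam.parts then w k * F (lam.parts.erase k) else 0) := Finset.sum_comm
    _ = ∑ k ∈ Finset.Icc 1 n, w k * A (n - k) := by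
        refine Finset.sum_congr rfl fun k hkk => ?_
        rw [Finset.mem_Icc] at hkk
        rw [← Finset.sum_filter, ← Finset.mul_sum, sum_filter_eq n k hkk.1 hkk.2]

lemma geo (m : ℕ) : ∑ k ∈ Finset.Icc 1 m, w k * (1 - RatFunc.X)
    = (m : RatFunc ℚ) * (1 - RatFunc.X) - (RatFunc.X - RatFunc.X ^ (m + 1)) := by
  induction m with
  | zero => simp
  | succ m ih =>
    rw [Finset.sum_Icc_succ_top (by omega), ih]
    unfold w
    push_cast
    ring

lemma A_zero : A 0 = 1 := by
  rw [A, Fintype.sum_unique]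
  simp [F, zNat]

lemma A_one_sub : ∀ n : ℕ, 1 ≤ n → A n = 1 - RatFunc.X := by
  intro n
  induction n using Nat.strong_induction_on with
  | _ n ih =>
    intro hn
    obtain ⟨m, rfl⟩ : ∃ m, n = m + 1 := ⟨n - 1, by omega⟩
    have hrec := recurrence (m + 1)
    rw [Finset.sum_Icc_succ_top (by omega)] at hrec
    have h0 : m + 1 - (m + 1) = 0 := by omega
    rw [h0, A_zero, mul_one] at hrec
    have hsum : ∑ k ∈ Finset.Icc 1 m, w k * A (m + 1 - k)
        = ∑ k ∈ Finset.Icc 1 m, w k * (1 - RatFunc.X) := by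
      refine Finset.sum_congr rfl fun k hkk => ?_
      rw [Finset.mem_Icc] at hkk
      rw [ih (m + 1 - k) (by omega) (by omega)]
    rw [hsum, geo m] at hrec
    have hn0 : ((m + 1 : ℕ) : RatFunc ℚ) ≠ 0 := Nat.cast_ne_zero.mpr (by omega)
    refine mul_left_cancel₀ hn0 ?_
    rw [hrec]
    unfold w
    push_cast
    ring

end ZlamAux

/-- for `n ≥ 1`, `∑_{λ ⊢ n} 1 / z_λ(t) = 1 - t` in `ℚ(t)`, where
`1/z_λ(t) = (∏_j (1 - t^{λ_j})) / (∏_i i^{m_i} m_i!)`. -/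
theorem sum_inv_zlam_t (n : ℕ) (hn : 1 ≤ n) :
    ∑ lam : n.Partition,
        (lam.parts.map (fun j => 1 - (RatFunc.X : RatFunc ℚ) ^ j)).prod /
          (zNat lam.parts : RatFunc ℚ)
      = 1 - (RatFunc.X : RatFunc ℚ) := by
  have h := ZlamAux.A_one_sub n hn
  have hw : ZlamAux.w = fun j => 1 - (RatFunc.X : RatFunc ℚ) ^ j := rfl
  simpa [ZlamAux.A, ZlamAux.F, hw] using h
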